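/- Let k ≥ 2 and let g be a k-monotone probability density on (0,∞), i.e. g(x) = ∫₀^∞ (k/y^k)(y−x)₊^{k−1} dF(y) for a probability distribution F on (0,∞). Then for every x > 0, g(x) ≤ (1/x)(1 − 1/k)^{k−1}. -/

import Mathlib

open MeasureTheory

lemma amgm_aux (k : ℕ) (hk : 2 ≤ k) (a b : ℝ) (ha : 0 ≤ a) (hb : 0 ≤ b) :
    a ^ (k - 1) * b ≤ ((((k : ℝ) - 1) * a + b) / k) ^ k := by
  have hk0 : (0:ℝ) < k := by positivity
  set w₁ : ℝ := ((k:ℝ) - 1) / k with hw₁def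
  set w₂ : ℝ := 1 / k with hw₂def
  have hw₁ : 0 ≤ w₁ := by
    apply div_nonneg _ hk0.le
    have : (2:ℝ) ≤ k := by exact_mod_cast hk
    linarith
  have hw₂ : 0 ≤ w₂ := by positivity
  have hw : w₁ + w₂ = 1 := by rw [hw₁def, hw₂def]; field_simp; ring
  have h := Real.geom_mean_le_arith_mean2_weighted hw₁ hw₂ ha hb hw
  have h2 := pow_le_pow_left₀ (by positivity) h k
  have hL : (a ^ w₁ * b ^ w₂) ^ k = a ^ (k - 1) * b := by
    rw [mul_pow, ← Real.rpow_natCast (a ^ w₁) k, ← Real.rpow_natCast (b ^ w₂) k,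
      ← Real.rpow_natCast a (k-1),
      ← Real.rpow_mul ha, ← Real.rpow_mul hb]
    congr 1
    · congr 1
      rw [hw₁def, Nat.cast_sub (by omega)]
      push_cast
      field_simp
    · rw [hw₂def]
      field_simp
      simp
  have hR : (w₁ * a + w₂ * b) ^ k = ((((k : ℝ) - 1) * a + b) / k) ^ k := by
    congr 1
    rw [hw₁def, hw₂def]
    field_simp
  rw [hL, hR] at h2
  exact h2

lemma ptwise (k : ℕ) (hk : 2 ≤ k) (x y : ℝ) (hx : 0 < x) (hy : 0 < y) :
    (k / y ^ k) * (max (y - x) 0) ^ (k - 1) ≤ (1 / x) * (1 - 1 / (k : ℝ)) ^ (k - 1) := by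
  have hk0 : (0:ℝ) < k := by positivity
  have hk2 : (2:ℝ) ≤ k := by exact_mod_cast hk
  have hk1 : (0:ℝ) < (k:ℝ) - 1 := by linarith
  have hRpos : 0 ≤ (1 / x) * (1 - 1 / (k : ℝ)) ^ (k - 1) := by
    apply mul_nonneg (by positivity)
    apply pow_nonneg
    rw [le_sub_iff_add_le, zero_add, div_le_one hk0]
    linarith
  rcases le_or_gt y x with hyx | hyx
  · rw [max_eq_right (by linarith), zero_pow (by omega), mul_zero]
    exact hRpos
  · rw [max_eq_left (by linarith)]
    have h := amgm_aux k hk ((y - x) / ((k:ℝ) - 1)) x (div_nonneg (by linarith) hk1.le) hx.le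
    have hax : ((k:ℝ) - 1) * ((y - x) / ((k:ℝ) - 1)) + x = y := by field_simp; ring
    rw [hax, div_pow, div_pow] at h
    -- h : (y-x)^(k-1) / (k-1)^(k-1) * x ≤ y^k / k^k
    have h1mk : (1 : ℝ) - 1 / k = ((k:ℝ) - 1) / k := by field_simp
    rw [div_mul_eq_mul_div, div_le_div_iff₀ (by positivity) (by positivity)] at h
    have hkk : (k:ℝ) * (k:ℝ) ^ (k - 1) = (k:ℝ) ^ k := by
      rw [← pow_succ']
      congr 1
      omega
    calc (k / y ^ k) * (y - x) ^ (k - 1) = ((k:ℝ) * (y - x) ^ (k - 1)) / y ^ k := by ring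
      _ ≤ ((k:ℝ) - 1) ^ (k - 1) / (x * (k:ℝ) ^ (k - 1)) := by
          rw [div_le_div_iff₀ (by positivity) (by positivity)]
          have he : (k:ℝ) * (y - x) ^ (k - 1) * (x * (k:ℝ) ^ (k - 1))
              = (y - x) ^ (k - 1) * x * (k:ℝ) ^ k := by rw [← hkk]; ring
          rw [he]
          linarith [h]
      _ = (1 / x) * (1 - 1 / (k:ℝ)) ^ (k - 1) := by
          rw [h1mk, div_pow]
          field_simp

theorem kMonotone_density_bound
    (k : ℕ) (hk : 2 ≤ k)
    (F : Measure ℝ) [IsProbabilityMeasure F] (hF : F (Set.Iic 0) = 0)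
    (g : ℝ → ℝ)
    (hg : ∀ x : ℝ, 0 < x →
      g x = ∫ y in Set.Ioi (0:ℝ), (k / y ^ k) * (max (y - x) 0) ^ (k - 1) ∂F) :
    ∀ x : ℝ, 0 < x → g x ≤ (1 / x) * (1 - 1 / (k : ℝ)) ^ (k - 1) := by
  intro x hx
  rw [hg x hx]
  have hIoi : F (Set.Ioi (0:ℝ)) = 1 := by
    have h1 := measure_compl (measurableSet_Iic (a := (0:ℝ))) (measure_ne_top F _)
    rw [hF, Set.compl_Iic, measure_univ, tsub_zero] at h1
    exact h1
  have hle : (∫ y in Set.Ioi (0:ℝ), (k / y ^ k) * (max (y - x) 0) ^ (k - 1) ∂F)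
      ≤ ∫ _ in Set.Ioi (0:ℝ), (1 / x) * (1 - 1 / (k : ℝ)) ^ (k - 1) ∂F := by
    apply integral_mono_of_nonneg
    · filter_upwards [ae_restrict_mem measurableSet_Ioi] with y hy
      exact mul_nonneg (div_nonneg (Nat.cast_nonneg k) (pow_nonneg (le_of_lt hy) k))
        (pow_nonneg (le_max_right _ _) _)
    · exact integrable_const _
    · filter_upwards [ae_restrict_mem measurableSet_Ioi] with y hy
      exact ptwise k hk x y hx hy
  refine hle.trans_eq ?_
  rw [setIntegral_const, measureReal_def, hIoi]
  simp
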